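/- (Laplace's method) Let f_k : [0,1] → ℝ be a sequence of continuous functions converging uniformly to f : [0,1] → ℝ. Then lim_{k→∞} (1/k) log ∫₀¹ e^{k f_k(x)} dx = sup_{x∈[0,1]} f(x). -/

import Mathlib

open MeasureTheory Filter

/-- Laplace's method: if continuous f_k → f uniformly on [0,1], then
(1/k) log ∫₀¹ e^{k f_k(x)} dx → sup_{[0,1]} f. -/
theorem stmt7 (f : ℝ → ℝ) (F : ℕ → ℝ → ℝ)
    (hc : ∀ k, ContinuousOn (F k) (Set.Icc 0 1))
    (hunif : TendstoUniformlyOn F f atTop (Set.Icc 0 1)) :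
    Tendsto (fun k : ℕ =>
        (1 / (k : ℝ)) * Real.log (∫ x in Set.Icc (0:ℝ) 1, Real.exp (k * F k x)))
      atTop (nhds (sSup (f '' Set.Icc 0 1))) := by
  have hK : IsCompact (Set.Icc (0:ℝ) 1) := isCompact_Icc
  have hfc : ContinuousOn f (Set.Icc 0 1) :=
    hunif.continuousOn (Filter.Eventually.of_forall hc).frequently
  have hne : (Set.Icc (0:ℝ) 1).Nonempty := ⟨0, by norm_num⟩
  obtain ⟨x₀, hx₀, hmax⟩ := hK.exists_isMaxOn hne hfc
  set M := sSup (f '' Set.Icc 0 1) with hM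
  have hMx : f x₀ = M := le_antisymm
    (le_csSup ((hK.image_of_continuousOn hfc).bddAbove) ⟨x₀, hx₀, rfl⟩)
    (csSup_le (hne.image f) (by rintro y ⟨x, hx, rfl⟩; exact hmax hx))
  have hle : ∀ x ∈ Set.Icc (0:ℝ) 1, f x ≤ M := fun x hx => hMx ▸ hmax hx
  rw [Metric.tendsto_nhds]
  intro ε hε
  set ε' := ε / 4 with hε'def
  have hε' : 0 < ε' := by positivity
  obtain ⟨δ, hδ, hδf⟩ := Metric.continuousWithinAt_iff.1 (hfc x₀ hx₀) ε' hε'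
  set a := max 0 (x₀ - δ/2) with ha
  set b := min 1 (x₀ + δ/2) with hb
  have hx₀1 : (0:ℝ) ≤ x₀ := hx₀.1
  have hx₀2 : x₀ ≤ 1 := hx₀.2
  have hab : a < b := by
    simp only [ha, hb, max_lt_iff, lt_min_iff]
    refine ⟨⟨by norm_num, by linarith⟩, ⟨by linarith, by linarith⟩⟩
  have hsub : Set.Icc a b ⊆ Set.Icc (0:ℝ) 1 :=
    Set.Icc_subset_Icc (le_max_left _ _) (min_le_left _ _)
  have ha' : x₀ - δ/2 ≤ a := le_max_right _ _
  have hb' : b ≤ x₀ + δ/2 := min_le_right _ _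
  have hfab : ∀ x ∈ Set.Icc a b, M - ε' < f x := by
    intro x hx
    have hd : dist x x₀ < δ := by
      rw [Real.dist_eq, abs_lt]
      constructor <;> [linarith [hx.1]; linarith [hx.2]]
    have := hδf (hsub hx) hd
    rw [Real.dist_eq, abs_lt] at this
    linarith [this.1, this.2, hMx ▸ le_refl (f x₀)]
  have h1 := Metric.tendstoUniformlyOn_iff.1 hunif ε' hε'
  have h2 : ∀ᶠ k : ℕ in atTop, (1:ℝ) ≤ (k:ℝ) := by
    filter_upwards [eventually_ge_atTop 1] with k hk
    exact_mod_cast hk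
  have h3 : Tendsto (fun k : ℕ => Real.log (b - a) / (k:ℝ)) atTop (nhds 0) :=
    tendsto_const_div_atTop_nhds_zero_nat _
  have h3' := Metric.tendsto_nhds.1 h3 ε' hε'
  filter_upwards [h1, h2, h3'] with k hk1 hk2 hk3
  have hkpos : (0:ℝ) < (k:ℝ) := by linarith
  have hk0 : (k:ℝ) ≠ 0 := ne_of_gt hkpos
  set I := ∫ x in Set.Icc (0:ℝ) 1, Real.exp (k * F k x) with hI
  have hcont : ContinuousOn (fun x => Real.exp ((k:ℝ) * F k x)) (Set.Icc 0 1) :=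
    Real.continuous_exp.comp_continuousOn (continuousOn_const.mul (hc k))
  have hInt : IntegrableOn (fun x => Real.exp ((k:ℝ) * F k x)) (Set.Icc 0 1) :=
    hcont.integrableOn_Icc
  have hba : (0:ℝ) < b - a := by linarith
  -- lower bound on the integral over [a, b]
  have hlow1 : ∫ x in Set.Icc a b, Real.exp ((k:ℝ) * (M - 2*ε')) ≤
      ∫ x in Set.Icc a b, Real.exp ((k:ℝ) * F k x) := by
    refine setIntegral_mono_on (integrableOn_const ?_)
      (hInt.mono_set hsub) measurableSet_Icc ?_
    · rw [Real.volume_Icc]; exact ENNReal.ofReal_ne_top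
    · intro x hx
      have hfx := hfab x hx
      have hF := hk1 x (hsub hx)
      rw [Real.dist_eq, abs_lt] at hF
      exact Real.exp_le_exp.2 (mul_le_mul_of_nonneg_left (by linarith [hF.1]) hkpos.le)
  have hvolab : volume.real (Set.Icc a b) = b - a := by
    rw [measureReal_def, Real.volume_Icc, ENNReal.toReal_ofReal (by linarith)]
  rw [setIntegral_const, hvolab, smul_eq_mul] at hlow1
  have hlow2 : ∫ x in Set.Icc a b, Real.exp ((k:ℝ) * F k x) ≤ I :=
    setIntegral_mono_set hInt
      (Filter.Eventually.of_forall fun x => (Real.exp_pos _).le)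
      (HasSubset.Subset.eventuallyLE hsub)
  have hlow : (b - a) * Real.exp ((k:ℝ) * (M - 2*ε')) ≤ I := le_trans hlow1 hlow2
  -- upper bound
  have hup1 : I ≤ ∫ x in Set.Icc (0:ℝ) 1, Real.exp ((k:ℝ) * (M + ε')) := by
    refine setIntegral_mono_on hInt (integrableOn_const ?_)
      measurableSet_Icc ?_
    · rw [Real.volume_Icc]; exact ENNReal.ofReal_ne_top
    · intro x hx
      have hF := hk1 x hx
      rw [Real.dist_eq, abs_lt] at hF
      have := hle x hx
      exact Real.exp_le_exp.2 (mul_le_mul_of_nonneg_left (by linarith [hF.2]) hkpos.le)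
  have hvol01 : volume.real (Set.Icc (0:ℝ) 1) = 1 := by
    rw [measureReal_def, Real.volume_Icc, ENNReal.toReal_ofReal (by norm_num)]; norm_num
  rw [setIntegral_const, hvol01, one_smul] at hup1
  have hIpos : 0 < I := lt_of_lt_of_le (by positivity) hlow
  -- logarithm bounds
  have hlogup : Real.log I ≤ (k:ℝ) * (M + ε') := by
    have := Real.log_le_log hIpos hup1
    rwa [Real.log_exp] at this
  have hloglow : Real.log (b - a) + (k:ℝ) * (M - 2*ε') ≤ Real.log I := by
    have := Real.log_le_log (by positivity) hlow
    rwa [Real.log_mul (ne_of_gt hba) (Real.exp_ne_zero _), Real.log_exp] at this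
  rw [Real.dist_eq, abs_lt]
  rw [Real.dist_eq, sub_zero, abs_lt] at hk3
  have hub : (1 / (k:ℝ)) * Real.log I ≤ M + ε' := by
    have h := mul_le_mul_of_nonneg_left hlogup (by positivity : (0:ℝ) ≤ 1 / (k:ℝ))
    calc (1 / (k:ℝ)) * Real.log I ≤ (1 / (k:ℝ)) * ((k:ℝ) * (M + ε')) := h
      _ = M + ε' := by field_simp
  have hlb : Real.log (b - a) / (k:ℝ) + (M - 2*ε') ≤ (1 / (k:ℝ)) * Real.log I := by
    have h := mul_le_mul_of_nonneg_left hloglow (by positivity : (0:ℝ) ≤ 1 / (k:ℝ))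
    calc Real.log (b - a) / (k:ℝ) + (M - 2*ε')
        = (1 / (k:ℝ)) * (Real.log (b - a) + (k:ℝ) * (M - 2*ε')) := by field_simp
      _ ≤ (1 / (k:ℝ)) * Real.log I := h
  constructor
  · linarith [hk3.1]
  · rw [hε'def] at hub; linarith
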